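/- arXiv:2309.13236 — 7 statements merged into one kernel-verified Lean document; each statement's English description precedes it below -/
import Mathlib

section
/- Let d ≤ n be positive integers and let P be a d×n real matrix of rank d over ℝ whose n columns p₁,…,pₙ (vectors in ℝ^d) are linearly independent over ℚ. Then the set {P^T x mod ℤ^n : x ∈ ℝ^d} is dense in the torus 𝕋^n; equivalently, the map ℝ^d → 𝕋^n sending x to the class of P^T x has dense range. -/
open Filter Topology

lemma aux_discrete {E : Type*} [NormedAddCommGroup E] [NormedSpace ℝ E]
    [FiniteDimensional ℝ E] (H : AddSubgroup E) (hc : IsClosed (H : Set E))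
    (hl : ∀ u : E, u ≠ 0 → ∃ t : ℝ, t • u ∉ H) :
    ∃ ε > 0, ∀ h ∈ H, ‖h‖ < ε → h = 0 := by
  by_contra hcon
  push_neg at hcon
  choose h hmem hlt hne using fun k : ℕ => hcon (1/(k+1)) (by positivity)
  have hnorm : ∀ k, ‖h k‖ ≠ 0 := fun k => norm_ne_zero_iff.mpr (hne k)
  set u : ℕ → E := fun k => ‖h k‖⁻¹ • h k with hu
  have husph : ∀ k, u k ∈ Metric.sphere (0:E) 1 := by
    intro k
    simp [u, norm_smul, inv_mul_cancel₀ (hnorm k)]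
  obtain ⟨u₀, hu₀, φ, hφ, hconv⟩ := (isCompact_sphere (0:E) 1).tendsto_subseq husph
  have hu₀ne : u₀ ≠ 0 := by
    intro h0
    rw [h0] at hu₀
    simp at hu₀
  obtain ⟨t, ht⟩ := hl u₀ hu₀ne
  apply ht
  have hrpos : ∀ k, 0 < ‖h (φ k)‖ := fun k => (hnorm (φ k)).symm.lt_of_le (norm_nonneg _)
  have hrlim : Tendsto (fun k => ‖h (φ k)‖) atTop (𝓝 0) := by
    have hb : ∀ k : ℕ, ‖h (φ k)‖ ≤ 1/(k+1) := by
      intro k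
      refine le_trans (hlt (φ k)).le (one_div_le_one_div_of_le (by positivity) ?_)
      have h6 : (k : ℝ) ≤ (φ k : ℝ) := Nat.cast_le.mpr hφ.le_apply
      linarith
    exact squeeze_zero (fun k => norm_nonneg _) hb tendsto_one_div_add_atTop_nhds_zero_nat
  set c : ℕ → ℝ := fun k => (⌊t / ‖h (φ k)‖⌋ : ℝ) * ‖h (φ k)‖ with hc'
  have hclim : Tendsto c atTop (𝓝 t) := by
    rw [tendsto_iff_norm_sub_tendsto_zero]
    refine squeeze_zero (fun k => norm_nonneg _) (fun k => ?_) hrlim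
    have h1 : (⌊t / ‖h (φ k)‖⌋ : ℝ) ≤ t / ‖h (φ k)‖ := Int.floor_le _
    have h2 : t / ‖h (φ k)‖ < ⌊t / ‖h (φ k)‖⌋ + 1 := Int.lt_floor_add_one _
    have h3 : t / ‖h (φ k)‖ * ‖h (φ k)‖ = t := div_mul_cancel₀ t (hnorm (φ k))
    have h4 : (⌊t / ‖h (φ k)‖⌋ : ℝ) * ‖h (φ k)‖ ≤ t := by
      have := mul_le_mul_of_nonneg_right h1 (norm_nonneg (h (φ k)))
      rwa [h3] at this
    have h5 : t < (⌊t / ‖h (φ k)‖⌋ : ℝ) * ‖h (φ k)‖ + ‖h (φ k)‖ := by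
      have := mul_lt_mul_of_pos_right h2 (hrpos k)
      rw [h3, add_mul, one_mul] at this
      linarith
    rw [Real.norm_eq_abs, abs_le]
    constructor <;> simp only [hc'] <;> linarith
  have key : Tendsto (fun k => c k • u (φ k)) atTop (𝓝 (t • u₀)) := hclim.smul hconv
  have hin : ∀ k, c k • u (φ k) ∈ H := by
    intro k
    have heq : c k • u (φ k) = (⌊t / ‖h (φ k)‖⌋ : ℤ) • h (φ k) := by
      rw [hu, smul_smul, hc', ← Int.cast_smul_eq_zsmul ℝ]
      congr 1
      rw [mul_assoc, mul_inv_cancel₀ (hnorm _), mul_one]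
    rw [heq]
    exact AddSubgroup.zsmul_mem H (hmem _) _
  exact hc.mem_of_tendsto key (Eventually.of_forall hin)

open Filter Topology Submodule

/-- **Theorem 3.1.** For a projection matrix `P ∈ ℝ^{d×n}` (full real rank `d`,
columns ℚ-linearly independent), the image of the irrational slice
`{Pᵀ x : x ∈ ℝ^d}` under the modulo map is dense in the torus `𝕋^n`. -/
theorem slice_dense_in_torus
    (d n : ℕ) (hd : 0 < d) (hn : 0 < n) (hdn : d ≤ n)
    (P : Matrix (Fin d) (Fin n) ℝ)
    (hrank : P.rank = d)
    (hcols : LinearIndependent ℚ (fun j : Fin n => fun i : Fin d => P i j)) :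
    DenseRange (fun x : Fin d → ℝ =>
      fun i : Fin n => ((P.transpose.mulVec x i : ℝ) : AddCircle (1 : ℝ))) := by
  classical
  set Pt : (Fin d → ℝ) →ₗ[ℝ] (Fin n → ℝ) := P.transpose.mulVecLin with hPtdef
  set V : Submodule ℝ (Fin n → ℝ) := LinearMap.range Pt with hVdef
  set ZL : AddSubgroup (Fin n → ℝ) :=
    AddSubgroup.closure (Set.range fun j : Fin n => (Pi.single j 1 : Fin n → ℝ)) with hZLdef
  set S : AddSubgroup (Fin n → ℝ) := V.toAddSubgroup ⊔ ZL with hSdef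
  -- Step 1: S is dense in ℝ^n
  have hSdense : Dense (S : Set (Fin n → ℝ)) := by
    by_contra hnd
    rw [dense_iff_closure_eq] at hnd
    obtain ⟨a, ha⟩ : ∃ a, a ∉ closure (S : Set (Fin n → ℝ)) := by
      by_contra hall
      push_neg at hall
      exact hnd (Set.eq_univ_of_forall hall)
    set H : AddSubgroup (Fin n → ℝ) := S.topologicalClosure with hHdef
    have hHcoe : (H : Set (Fin n → ℝ)) = closure (S : Set (Fin n → ℝ)) := rfl
    have hHclosed : IsClosed (H : Set (Fin n → ℝ)) := isClosed_closure
    have hSH : ∀ x ∈ S, x ∈ H := fun x hx => subset_closure hx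
    -- the maximal subspace inside H
    set W : Submodule ℝ (Fin n → ℝ) :=
      { carrier := {x | ∀ t : ℝ, t • x ∈ H}
        add_mem' := fun hx hy t => by
          rw [smul_add]; exact H.add_mem (hx t) (hy t)
        zero_mem' := fun t => by rw [smul_zero]; exact H.zero_mem
        smul_mem' := fun c x hx t => by rw [smul_smul]; exact hx (t * c) } with hWdef
    have hWH : ∀ x ∈ W, x ∈ H := fun x hx => by simpa using hx 1
    have hVW : ∀ x ∈ V, x ∈ W := by
      rintro x ⟨y, rfl⟩ t
      rw [← map_smul]
      exact hSH _ (AddSubgroup.mem_sup_left ⟨t • y, rfl⟩)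
    have hWtop : W ≠ ⊤ := by
      intro hW
      exact ha (hWH a (hW ▸ Submodule.mem_top))
    obtain ⟨U, hcompl⟩ := Submodule.exists_isCompl W
    set πU : (Fin n → ℝ) →ₗ[ℝ] ↥U := U.linearProjOfIsCompl W hcompl.symm with hπdef
    have hπU_right : ∀ u : ↥U, πU ↑u = u := fun u =>
      Submodule.linearProjOfIsCompl_apply_left hcompl.symm u
    have hπU_left : ∀ x ∈ W, πU x = 0 := fun x hx =>
      Submodule.projectionOnto_apply_of_mem_right hcompl.symm hx
    have hsub : ∀ x : Fin n → ℝ, x - ↑(πU x) ∈ W := by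
      intro x
      have h9 := Submodule.projection_add_projection_eq_self hcompl x
      have h10 : (↑(W.linearProjOfIsCompl U hcompl x) : Fin n → ℝ) = x - ↑(πU x) := by
        rw [eq_sub_iff_add_eq]
        exact h9
      rw [← h10]
      exact SetLike.coe_mem _
    have hπH : ∀ x ∈ H, (↑(πU x) : Fin n → ℝ) ∈ H := by
      intro x hx
      have h1 : (↑(πU x) : Fin n → ℝ) = x - (x - ↑(πU x)) := (sub_sub_cancel _ _).symm
      rw [h1]
      exact H.sub_mem hx (hWH _ (hsub x))
    -- the lattice in U
    set L : Submodule ℤ ↥U :=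
      { carrier := {u | (u : Fin n → ℝ) ∈ H}
        add_mem' := fun hx hy => by
          simpa using H.add_mem hx hy
        zero_mem' := by simpa using H.zero_mem
        smul_mem' := fun c u hu => by
          have : (↑(c • u) : Fin n → ℝ) = c • (↑u : Fin n → ℝ) := by
            simp
          rw [Set.mem_setOf_eq, this]
          exact AddSubgroup.zsmul_mem H hu c } with hLdef
    have hLmem : ∀ u : ↥U, u ∈ L ↔ (u : Fin n → ℝ) ∈ H := fun u => Iff.rfl
    -- single j 1 ∈ H
    have hsingle : ∀ j : Fin n, (Pi.single j 1 : Fin n → ℝ) ∈ H := fun j =>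
      hSH _ (AddSubgroup.mem_sup_right (AddSubgroup.subset_closure ⟨j, rfl⟩))
    have hπsingle : ∀ j : Fin n, πU (Pi.single j 1) ∈ L := fun j =>
      hπH _ (hsingle j)
    -- discreteness
    have hdisc : ∃ ε > 0, ∀ h ∈ L.toAddSubgroup, ‖h‖ < ε → h = 0 := by
      apply aux_discrete
      · have : (L.toAddSubgroup : Set ↥U) =
            (Subtype.val) ⁻¹' (closure (S : Set (Fin n → ℝ))) := rfl
        rw [this]
        exact isClosed_closure.preimage continuous_subtype_val
      · intro u hu
        by_contra hall
        push_neg at hall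
        apply hu
        have hmemW : (u : Fin n → ℝ) ∈ W := by
          intro t
          have h7 : (↑(t • u) : Fin n → ℝ) ∈ H := hall t
          simpa using h7
        have : (u : Fin n → ℝ) ∈ W ⊓ U := ⟨hmemW, u.2⟩
        rw [hcompl.inf_eq_bot] at this
        exact Subtype.ext (by simpa using this)
    obtain ⟨ε, hε, hεp⟩ := hdisc
    haveI hdiscL : DiscreteTopology ↥L := by
      rw [discreteTopology_iff_isOpen_singleton_zero]
      have : {(0 : ↥L)} = (fun x : ↥L => (x : ↥U)) ⁻¹' (Metric.ball (0 : ↥U) ε) := by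
        ext x
        simp only [Set.mem_singleton_iff, Set.mem_preimage, Metric.mem_ball, dist_zero_right]
        constructor
        · rintro rfl; simpa using hε
        · intro hx
          exact Subtype.ext (hεp _ x.2 hx)
      rw [this]
      exact Metric.isOpen_ball.preimage continuous_subtype_val
    -- L spans U over ℝ
    have hspan : span ℝ (L : Set ↥U) = ⊤ := by
      rw [eq_top_iff]
      rintro u -
      have hu : u = πU ↑u := (hπU_right u).symm
      have hexp : (↑u : Fin n → ℝ) = ∑ j : Fin n, Pi.single j ((u : Fin n → ℝ) j) :=
        (Finset.univ_sum_single _).symm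
      have hss : ∀ (j : Fin n) (c : ℝ), (Pi.single j c : Fin n → ℝ) = c • (Pi.single j 1 : Fin n → ℝ) := by
        intro j c
        funext k
        simp only [Pi.smul_apply, Pi.single_apply, smul_eq_mul]
        split <;> simp
      rw [hu, hexp, map_sum]
      refine Submodule.sum_mem _ fun j _ => ?_
      rw [hss, map_smul]
      exact Submodule.smul_mem _ _ (Submodule.subset_span (hπsingle j))
    haveI hZlat : IsZLattice ℝ L := ⟨hspan⟩
    -- choose a ℤ-basis of L, get ℝ-basis of U
    have hUne : U ≠ ⊥ := by
      intro hU
      apply hWtop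
      have := hcompl.sup_eq_top
      rwa [hU, sup_bot_eq] at this
    haveI hUnontriv : Nontrivial ↥U := Submodule.nontrivial_iff_ne_bot.mpr hUne
    set b := Module.Free.chooseBasis ℤ ↥L with hbdef
    set B := b.ofZLatticeBasis ℝ L with hBdef
    have hBspan : span ℤ (Set.range B) = L := b.ofZLatticeBasis_span ℝ
    have : Nonempty (Module.Free.ChooseBasisIndex ℤ ↥L) := B.index_nonempty
    obtain ⟨i₀⟩ := this
    -- the integer functional
    set F : (Fin n → ℝ) →ₗ[ℝ] ℝ := (B.coord i₀) ∘ₗ πU with hFdef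
    have hFint : ∀ j : Fin n, ∃ z : ℤ, (z : ℝ) = F (Pi.single j 1) := by
      intro j
      have hmem : πU (Pi.single j 1) ∈ span ℤ (Set.range B) := by
        rw [hBspan]; exact hπsingle j
      have := (B.mem_span_iff_repr_mem ℤ _).mp hmem i₀
      obtain ⟨z, hz⟩ := this
      exact ⟨z, by simpa [F, Module.Basis.coord_apply] using hz⟩
    choose z hz using hFint
    -- F vanishes on V
    have hFV : ∀ x : Fin d → ℝ, F (Pt x) = 0 := by
      intro x
      have : πU (Pt x) = 0 := hπU_left _ (hVW _ ⟨x, rfl⟩)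
      simp [F, this]
    -- F is nonzero
    have hFne : F ↑(B i₀) = 1 := by
      have h8 : πU ↑(B i₀) = B i₀ := hπU_right _
      simp [F, h8, Module.Basis.coord_apply]
    -- expansion of F
    have hss : ∀ (j : Fin n) (c : ℝ), (Pi.single j c : Fin n → ℝ) = c • (Pi.single j 1 : Fin n → ℝ) := by
      intro j c
      funext k
      simp only [Pi.smul_apply, Pi.single_apply, smul_eq_mul]
      split <;> simp
    have hFexp : ∀ v : Fin n → ℝ, F v = ∑ j, v j * (z j : ℝ) := by
      intro v
      conv_lhs => rw [← Finset.univ_sum_single v, map_sum]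
      refine Finset.sum_congr rfl fun j _ => ?_
      rw [hss, map_smul, ← hz j, smul_eq_mul]
    -- the z's give a rational relation among columns
    have hrel : ∀ i : Fin d, ∑ j, (z j : ℝ) * P i j = 0 := by
      intro i
      have h0 := hFV (Pi.single i 1)
      rw [hFexp] at h0
      have : ∀ j, Pt (Pi.single i 1) j = P i j := by
        intro j
        simp [Pt, Matrix.mulVecLin_apply, Matrix.mulVec, dotProduct,
          Pi.single_apply]
      rw [Finset.sum_congr rfl fun j _ => by rw [this j]] at h0
      simpa [mul_comm] using h0
    -- contradiction with ℚ-linear independence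
    have hsum : (∑ j : Fin n, ((z j : ℚ)) • (fun i : Fin d => P i j)) = (0 : Fin d → ℝ) := by
      funext i
      rw [Finset.sum_apply]
      have hterm : ∀ j : Fin n, (((z j : ℚ)) • (fun i => P i j)) i = (z j : ℝ) * P i j := by
        intro j
        rw [Pi.smul_apply, Rat.smul_def]
        norm_num
      rw [Finset.sum_congr rfl fun j _ => hterm j, Pi.zero_apply]
      exact hrel i
    have hzall : ∀ j, z j = 0 := by
      have h11 := Fintype.linearIndependent_iff.mp hcols (fun j => (z j : ℚ)) hsum
      intro j
      have h12 : ((z j : ℚ)) = 0 := h11 j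
      exact_mod_cast h12
    have : F ↑(B i₀) = 0 := by
      rw [hFexp]
      simp [hzall]
    rw [hFne] at this
    exact one_ne_zero this
  -- Step 2: transfer density to the torus
  set q : (Fin n → ℝ) →+ (Fin n → AddCircle (1 : ℝ)) :=
    { toFun := fun v i => ((v i : ℝ) : AddCircle (1 : ℝ))
      map_zero' := by funext i; simp
      map_add' := by
        intro a b
        funext i
        show ((a i + b i : ℝ) : AddCircle (1 : ℝ)) =
          ((a i : ℝ) : AddCircle (1 : ℝ)) + ((b i : ℝ) : AddCircle (1 : ℝ))
        exact AddCircle.coe_add (p := 1) (a i) (b i) } with hqdef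
  have hqcont : Continuous q := continuous_pi fun i =>
    (AddCircle.continuous_mk' 1).comp (continuous_apply i)
  have hqsurj : Function.Surjective q := by
    intro y
    refine ⟨fun i => (y i).out, funext fun i => ?_⟩
    exact Quotient.out_eq (y i)
  have hker : ∀ v ∈ ZL, q v = 0 := by
    intro v hv
    rw [hZLdef] at hv
    refine AddSubgroup.closure_induction ?_ (map_zero q) ?_ ?_ hv
    · rintro x ⟨j, rfl⟩
      funext i
      simp only [hqdef, AddMonoidHom.coe_mk, ZeroHom.coe_mk]
      by_cases hij : i = j
      · subst hij
        rw [Pi.single_eq_same]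
        exact AddCircle.coe_period 1
      · rw [Pi.single_eq_of_ne hij]
        simp
    · intro x y _ _ hx hy
      rw [map_add, hx, hy, add_zero]
    · intro x _ hx
      rw [map_neg, hx, neg_zero]
  have himg : q '' (S : Set (Fin n → ℝ)) ⊆
      Set.range (fun x : Fin d → ℝ =>
        fun i : Fin n => ((P.transpose.mulVec x i : ℝ) : AddCircle (1 : ℝ))) := by
    rintro - ⟨s, hs, rfl⟩
    have hs' : s ∈ V.toAddSubgroup ⊔ ZL := hs
    obtain ⟨v, hv, w, hw, rfl⟩ := AddSubgroup.mem_sup.mp hs'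
    obtain ⟨x, rfl⟩ := hv
    refine ⟨x, ?_⟩
    rw [map_add, hker w hw, add_zero]
    rfl
  have hdq : Dense (q '' (S : Set (Fin n → ℝ))) :=
    hqsurj.denseRange.dense_image hqcont hSdense
  exact hdq.mono himg
end

section
/- Let k and d be positive integers and let A be a k×d real matrix such that the k+d vectors consisting of the standard basis vectors e₁,…,e_d of ℝ^d together with the k rows of A are linearly independent over ℚ. Then the set {A t mod ℤ^k : t ∈ ℤ^d} is dense in the torus 𝕋^k. -/
open MeasureTheory Complex Submodule Set Filter Finset
open scoped Real

theorem fact_zero_lt_one_real : Fact ((0:ℝ) < 1) := ⟨one_pos⟩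

attribute [local instance] fact_zero_lt_one_real

namespace TorusDensityAux

/-- Characters of the `k`-torus. -/
noncomputable def torusChar (k : ℕ) (m : Fin k → ℤ) :
    C((Fin k → AddCircle (1 : ℝ)), ℂ) :=
  ⟨fun x => ∏ i, fourier (m i) (x i),
    continuous_finset_prod _ fun i _ => (fourier (m i)).continuous.comp (continuous_apply i)⟩

lemma torusChar_apply (k : ℕ) (m : Fin k → ℤ) (x : Fin k → AddCircle (1 : ℝ)) :
    torusChar k m x = ∏ i, fourier (m i) (x i) := rfl

lemma torusChar_zero (k : ℕ) : torusChar k 0 = 1 := by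
  ext x
  simp [torusChar_apply, fourier_zero]

lemma torusChar_add (k : ℕ) (m n : Fin k → ℤ) :
    torusChar k (m + n) = torusChar k m * torusChar k n := by
  ext x
  simp [torusChar_apply, fourier_add, Finset.prod_mul_distrib]

lemma torusChar_star (k : ℕ) (m : Fin k → ℤ) :
    star (torusChar k m) = torusChar k (-m) := by
  ext x
  simp [torusChar_apply, ← fourier_neg, map_prod]

/-- The star subalgebra generated by the torus characters. -/
noncomputable def torusSubalgebra (k : ℕ) :
    StarSubalgebra ℂ C((Fin k → AddCircle (1 : ℝ)), ℂ) where
  toSubalgebra := Algebra.adjoin ℂ (Set.range (torusChar k))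
  star_mem' := by
    show Algebra.adjoin ℂ (Set.range (torusChar k)) ≤
      star (Algebra.adjoin ℂ (Set.range (torusChar k)))
    refine Algebra.adjoin_le ?_
    rintro - ⟨m, rfl⟩
    exact Algebra.subset_adjoin ⟨-m, (torusChar_star k m).symm⟩

theorem torusSubalgebra_coe (k : ℕ) :
    Subalgebra.toSubmodule (torusSubalgebra k).toSubalgebra
      = span ℂ (Set.range (torusChar k)) := by
  apply Algebra.adjoin_eq_span_of_subset
  refine Set.Subset.trans ?_ Submodule.subset_span
  intro x hx
  refine Submonoid.closure_induction (fun _ => id) ⟨0, ?_⟩ ?_ hx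
  · exact (torusChar_zero k).symm ▸ rfl
  · rintro - - - - ⟨m, rfl⟩ ⟨n, rfl⟩
    exact ⟨m + n, torusChar_add k m n⟩

theorem torusSubalgebra_separatesPoints (k : ℕ) :
    (torusSubalgebra k).SeparatesPoints := by
  intro x y hxy
  obtain ⟨i, hi⟩ : ∃ i, x i ≠ y i := by
    by_contra h
    push_neg at h
    exact hxy (funext h)
  refine ⟨_, ⟨torusChar k (Pi.single i 1), Algebra.subset_adjoin ⟨_, rfl⟩, rfl⟩, ?_⟩
  dsimp only
  rw [torusChar_apply, torusChar_apply]
  have hx : ∀ z : Fin k → AddCircle (1:ℝ),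
      (∏ j, fourier ((Pi.single i 1 : Fin k → ℤ) j) (z j)) = fourier 1 (z i) := by
    intro z
    rw [Finset.prod_eq_single i]
    · simp
    · intro j _ hj
      rw [Pi.single_eq_of_ne hj]
      exact fourier_zero
    · simp
  rw [hx x, hx y]
  simp only [fourier_one]
  intro h
  rw [Circle.coe_inj] at h
  exact hi (AddCircle.injective_toCircle one_ne_zero h)

theorem torusSubalgebra_closure_eq_top (k : ℕ) :
    (torusSubalgebra k).topologicalClosure = ⊤ :=
  ContinuousMap.starSubalgebra_topologicalClosure_eq_top_of_separatesPoints _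
    (torusSubalgebra_separatesPoints k)

theorem span_torusChar_closure_eq_top (k : ℕ) :
    (span ℂ (Set.range (torusChar k))).topologicalClosure = ⊤ := by
  rw [← torusSubalgebra_coe]
  exact congr_arg (Subalgebra.toSubmodule <| StarSubalgebra.toSubalgebra ·)
    (torusSubalgebra_closure_eq_top k)

lemma card_Icc_int (N : ℕ) : (Finset.Icc (-(N:ℤ)) N).card = 2*N+1 := by
  rw [Int.card_Icc]; omega

lemma sum_zpow_eq (z : ℂ) (hz : z ≠ 0) (N : ℕ) :
    ∑ s ∈ Finset.Icc (-(N:ℤ)) N, z ^ s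
      = z ^ (-(N:ℤ)) * ∑ j ∈ Finset.range (2*N+1), z ^ j := by
  have h : Finset.Icc (-(N:ℤ)) N
      = Finset.map ⟨fun j : ℕ => (j : ℤ) - N, fun a b hab => by simp only at hab; omega⟩
          (Finset.range (2*N+1)) := by
    ext s
    simp only [Finset.mem_Icc, Finset.mem_map, Finset.mem_range, Function.Embedding.coeFn_mk]
    constructor
    · intro ⟨h1, h2⟩; exact ⟨(s + N).toNat, by omega, by show ((s + N).toNat : ℤ) - N = s; omega⟩
    · rintro ⟨j, hj, rfl⟩; show -(N:ℤ) ≤ (j:ℤ) - N ∧ (j:ℤ) - N ≤ N; omega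
  rw [h, Finset.sum_map, Finset.mul_sum]
  refine Finset.sum_congr rfl fun j _ => ?_
  show z ^ ((j:ℤ) - N) = _
  rw [zpow_sub₀ hz, zpow_natCast, zpow_natCast, div_eq_mul_inv,
    mul_comm, ← zpow_natCast z N, ← zpow_neg]

lemma norm_sum_zpow_le (z : ℂ) (hz : ‖z‖ = 1) (h1 : z ≠ 1) (N : ℕ) :
    ‖∑ s ∈ Finset.Icc (-(N:ℤ)) N, z ^ s‖ ≤ 2 / ‖z - 1‖ := by
  have hz0 : z ≠ 0 := by intro h; rw [h] at hz; simp at hz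
  rw [sum_zpow_eq z hz0 N, geom_sum_eq h1, norm_mul, norm_zpow, hz, one_zpow, one_mul,
    norm_div]
  gcongr
  calc ‖z ^ (2*N+1) - 1‖ ≤ ‖z ^ (2*N+1)‖ + ‖(1:ℂ)‖ := norm_sub_le _ _
    _ = 2 := by rw [norm_pow, hz]; norm_num

lemma norm_avg_le_one (z : ℂ) (hz : ‖z‖ = 1) (N : ℕ) :
    ‖(((2*N+1 : ℕ) : ℂ))⁻¹ * ∑ s ∈ Finset.Icc (-(N:ℤ)) N, z ^ s‖ ≤ 1 := by
  rw [norm_mul]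
  have h1 : ‖∑ s ∈ Finset.Icc (-(N:ℤ)) N, z ^ s‖ ≤ 2*N+1 := by
    calc ‖∑ s ∈ Finset.Icc (-(N:ℤ)) N, z ^ s‖
        ≤ ∑ s ∈ Finset.Icc (-(N:ℤ)) N, ‖z ^ s‖ := norm_sum_le _ _
      _ = 2*N+1 := by
          simp only [norm_zpow, hz, one_zpow]
          rw [Finset.sum_const, card_Icc_int]; push_cast; ring
  have h2 : ‖(((2*N+1 : ℕ) : ℂ))⁻¹‖ = ((2*N+1 : ℝ))⁻¹ := by
    rw [norm_inv]; norm_cast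
  rw [h2, inv_mul_le_iff₀ (by positivity)]
  linarith [h1]

lemma avg_tendsto_zero (z : ℂ) (hz : ‖z‖ = 1) (h1 : z ≠ 1) :
    Tendsto (fun N : ℕ => (((2*N+1 : ℕ) : ℂ))⁻¹ * ∑ s ∈ Finset.Icc (-(N:ℤ)) N, z ^ s)
      atTop (nhds 0) := by
  rw [tendsto_zero_iff_norm_tendsto_zero]
  apply squeeze_zero (fun N => norm_nonneg _)
    (g := fun N : ℕ => (2 / ‖z - 1‖) / (2*N+1 : ℝ))
  · intro N
    have h2 : ‖(((2*N+1 : ℕ) : ℂ))⁻¹‖ = ((2*N+1 : ℝ))⁻¹ := by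
      rw [norm_inv]; norm_cast
    calc ‖(((2*N+1 : ℕ) : ℂ))⁻¹ * ∑ s ∈ Finset.Icc (-(N:ℤ)) N, z ^ s‖
        = ((2*N+1 : ℝ))⁻¹ * ‖∑ s ∈ Finset.Icc (-(N:ℤ)) N, z ^ s‖ := by rw [norm_mul, h2]
      _ ≤ ((2*N+1 : ℝ))⁻¹ * (2 / ‖z - 1‖) := by
          gcongr
          exact norm_sum_zpow_le z hz h1 N
      _ = (2 / ‖z - 1‖) / (2*N+1 : ℝ) := by ring
  · apply Tendsto.div_atTop tendsto_const_nhds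
    apply tendsto_atTop_add_const_right
    exact (tendsto_natCast_atTop_atTop (R := ℝ)).const_mul_atTop two_pos

noncomputable instance : IsProbabilityMeasure (volume : Measure (AddCircle (1:ℝ))) :=
  ⟨by rw [AddCircle.measure_univ]; norm_num⟩

lemma integral_fourier_eq_zero {n : ℤ} (hn : n ≠ 0) :
    ∫ x : AddCircle (1:ℝ), fourier n x = 0 := by
  have h := AddCircle.intervalIntegral_preimage (T := 1) 0 (fun x => fourier n x)
  rw [zero_add] at h
  rw [← h]
  have hc : (2 * (π:ℂ) * I * n) ≠ 0 := by
    simp [Real.pi_ne_zero, I_ne_zero, hn]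
  calc ∫ x in (0:ℝ)..1, fourier n (x : AddCircle (1:ℝ))
      = ∫ x in (0:ℝ)..1, Complex.exp ((2 * (π:ℂ) * I * n) * x) := by
        refine intervalIntegral.integral_congr fun x _ => ?_
        rw [fourier_coe_apply]
        norm_num
    _ = (Complex.exp ((2 * (π:ℂ) * I * n) * 1) - Complex.exp ((2 * (π:ℂ) * I * n) * 0)) /
          (2 * (π:ℂ) * I * n) := integral_exp_mul_complex hc
    _ = 0 := by
        rw [mul_one, mul_zero, Complex.exp_zero]
        have : Complex.exp (2 * (π:ℂ) * I * n) = 1 := by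
          have := Complex.exp_int_mul_two_pi_mul_I n
          rw [← this]
          ring_nf
        rw [this]
        simp

lemma integral_fourier (n : ℤ) :
    ∫ x : AddCircle (1:ℝ), fourier n x = if n = 0 then 1 else 0 := by
  split_ifs with h
  · subst h
    simp only [fourier_zero]
    simp
  · exact integral_fourier_eq_zero h


lemma integral_torusChar (k : ℕ) (m : Fin k → ℤ) :
    ∫ x : Fin k → AddCircle (1:ℝ), torusChar k m x = if m = 0 then 1 else 0 := by
  have h : ∫ x : Fin k → AddCircle (1:ℝ), torusChar k m x
      = ∏ i, ∫ x : AddCircle (1:ℝ), fourier (m i) x := by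
    simp only [torusChar_apply]
    exact MeasureTheory.integral_fintype_prod_eq_prod
      (fun i (x : AddCircle (1:ℝ)) => fourier (m i) x)
  rw [h]
  by_cases hm : m = 0
  · subst hm
    simp only [Pi.zero_apply, integral_fourier, if_pos rfl]
    simp
  · obtain ⟨i, hi⟩ : ∃ i, m i ≠ 0 := by
      by_contra hc
      push_neg at hc
      exact hm (funext hc)
    rw [if_neg hm]
    exact Finset.prod_eq_zero (Finset.mem_univ i)
      (by rw [integral_fourier, if_neg hi])

section Main

variable (k d : ℕ) (A : Matrix (Fin k) (Fin d) ℝ)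

/-- The map `t ↦ A t mod ℤ^k`. -/
noncomputable def phi : (Fin d → ℤ) → (Fin k → AddCircle (1:ℝ)) :=
  fun t i => ((A.mulVec (fun j => (t j : ℝ)) i : ℝ) : AddCircle (1 : ℝ))

/-- The box `[-N, N]^d` in `ℤ^d`. -/
noncomputable def box (N : ℕ) : Finset (Fin d → ℤ) :=
  Fintype.piFinset fun _ => Finset.Icc (-(N:ℤ)) N

lemma card_box (N : ℕ) : (box d N).card = (2*N+1)^d := by
  rw [box, Fintype.card_piFinset]
  simp only [Int.card_Icc]
  rw [Finset.prod_const, Finset.card_univ, Fintype.card_fin]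
  congr 1
  omega

/-- The averaging functional over the box. -/
noncomputable def Lam (N : ℕ) (g : C((Fin k → AddCircle (1:ℝ)), ℂ)) : ℂ :=
  ((((2*N+1 : ℕ)) : ℂ) ^ d)⁻¹ * ∑ t ∈ box d N, g (phi k d A t)

lemma norm_Lam_le (N : ℕ) (g : C((Fin k → AddCircle (1:ℝ)), ℂ)) :
    ‖Lam k d A N g‖ ≤ ‖g‖ := by
  rw [Lam, norm_mul]
  have h2 : ‖((((2*N+1 : ℕ)) : ℂ) ^ d)⁻¹‖ = (((2*N+1 : ℕ) : ℝ) ^ d)⁻¹ := by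
    rw [norm_inv, norm_pow]; norm_cast
  have h3 : ‖∑ t ∈ box d N, g (phi k d A t)‖ ≤ ((2*N+1 : ℕ) : ℝ)^d * ‖g‖ := by
    calc ‖∑ t ∈ box d N, g (phi k d A t)‖ ≤ ∑ t ∈ box d N, ‖g (phi k d A t)‖ :=
          norm_sum_le _ _
      _ ≤ ∑ t ∈ box d N, ‖g‖ := Finset.sum_le_sum fun t _ => g.norm_coe_le_norm _
      _ = ((2*N+1 : ℕ) : ℝ)^d * ‖g‖ := by
          rw [Finset.sum_const, card_box, nsmul_eq_mul]
          push_cast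
          ring
  rw [h2]
  calc (((2*N+1 : ℕ) : ℝ) ^ d)⁻¹ * ‖∑ t ∈ box d N, g (phi k d A t)‖
      ≤ (((2*N+1 : ℕ) : ℝ) ^ d)⁻¹ * (((2*N+1 : ℕ) : ℝ)^d * ‖g‖) := by gcongr
    _ = ‖g‖ := by
        rw [inv_mul_cancel_left₀]
        positivity

lemma Lam_sub (N : ℕ) (g h : C((Fin k → AddCircle (1:ℝ)), ℂ)) :
    Lam k d A N (g - h) = Lam k d A N g - Lam k d A N h := by
  simp only [Lam, ContinuousMap.sub_apply, Finset.sum_sub_distrib, mul_sub]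

lemma Lam_sum (N : ℕ) (n : ℕ) (c : Fin n → ℂ)
    (G : Fin n → C((Fin k → AddCircle (1:ℝ)), ℂ)) :
    Lam k d A N (∑ i, c i • G i) = ∑ i, c i * Lam k d A N (G i) := by
  simp only [Lam, ContinuousMap.sum_apply, ContinuousMap.smul_apply, smul_eq_mul,
    Finset.mul_sum]
  rw [Finset.sum_comm]
  exact Finset.sum_congr rfl fun i _ => Finset.sum_congr rfl fun t _ => by ring

/-- The real frequencies `θ_j = ∑_i m_i A_{i j}`. -/
def theta (m : Fin k → ℤ) (j : Fin d) : ℝ := ∑ i, (m i : ℝ) * A i j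

/-- `z_j = exp(2πi θ_j)`. -/
noncomputable def zc (m : Fin k → ℤ) (j : Fin d) : ℂ :=
  Complex.exp (2 * (π:ℂ) * I * (theta k d A m j : ℂ))

lemma norm_zc (m : Fin k → ℤ) (j : Fin d) : ‖zc k d A m j‖ = 1 := by
  rw [zc]
  have h : 2 * (π:ℂ) * I * (theta k d A m j : ℂ)
      = ((2 * π * theta k d A m j : ℝ) : ℂ) * I := by
    push_cast
    ring
  rw [h, Complex.norm_exp_ofReal_mul_I]

lemma char_phi (m : Fin k → ℤ) (t : Fin d → ℤ) :
    torusChar k m (phi k d A t) = ∏ j, (zc k d A m j) ^ (t j) := by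
  rw [torusChar_apply]
  have h1 : ∀ i, fourier (m i) (phi k d A t i)
      = Complex.exp (2 * (π:ℂ) * I * (m i) * ((A.mulVec (fun j => (t j : ℝ)) i : ℝ) : ℂ) / 1) :=
    fun i => fourier_coe_apply
  simp only [h1, div_one]
  rw [← Complex.exp_sum]
  have h2 : ∑ i, 2 * (π:ℂ) * I * (m i) * ((A.mulVec (fun j => (t j : ℝ)) i : ℝ) : ℂ)
      = ∑ j, (t j : ℂ) * (2 * (π:ℂ) * I * (theta k d A m j : ℂ)) := by
    simp only [Matrix.mulVec, dotProduct, theta]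
    push_cast
    simp only [Finset.mul_sum]
    rw [Finset.sum_comm]
    refine Finset.sum_congr rfl fun j _ => Finset.sum_congr rfl fun i _ => by ring
  rw [h2, Complex.exp_sum]
  refine Finset.prod_congr rfl fun j _ => ?_
  rw [zc, Complex.exp_int_mul]

lemma Lam_char (N : ℕ) (m : Fin k → ℤ) :
    Lam k d A N (torusChar k m)
      = ∏ j, ((((2*N+1 : ℕ)) : ℂ)⁻¹ * ∑ s ∈ Finset.Icc (-(N:ℤ)) N, (zc k d A m j) ^ s) := by
  rw [Lam, box]
  simp only [char_phi]
  rw [Finset.prod_mul_distrib, ← Finset.prod_univ_sum]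
  congr 1
  rw [Finset.prod_const, Finset.card_univ, Fintype.card_fin, ← inv_pow]

lemma tendsto_Lam_char (m : Fin k → ℤ)
    (hindep : LinearIndependent ℚ
      (Sum.elim (fun i : Fin d => (Pi.single i 1 : Fin d → ℝ))
        (fun j : Fin k => fun i : Fin d => A j i))) :
    Filter.Tendsto (fun N => Lam k d A N (torusChar k m)) Filter.atTop
      (nhds (if m = 0 then 1 else 0)) := by
  by_cases hm : m = 0
  · subst hm
    rw [if_pos rfl]
    have h : ∀ N : ℕ, Lam k d A N (torusChar k 0) = 1 := by
      intro N
      rw [Lam_char]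
      have hz : ∀ j, zc k d A 0 j = 1 := by
        intro j
        rw [zc, theta]
        simp
      refine Finset.prod_eq_one fun j _ => ?_
      rw [hz j]
      simp only [one_zpow, Finset.sum_const, card_Icc_int, nsmul_eq_mul, mul_one]
      rw [inv_mul_cancel₀]
      exact_mod_cast Nat.succ_ne_zero (2*N)
    simp only [h]
    exact tendsto_const_nhds
  · rw [if_neg hm]
    -- find a coordinate with non-integral frequency
    have hj : ∃ j, zc k d A m j ≠ 1 := by
      by_contra hc
      push_neg at hc
      -- each θ_j is an integer
      have hint : ∀ j, ∃ n : ℤ, theta k d A m j = n := by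
        intro j
        have := hc j
        rw [zc, Complex.exp_eq_one_iff] at this
        obtain ⟨n, hn⟩ := this
        refine ⟨n, ?_⟩
        have h2 : (2 * (π:ℂ) * I) ≠ 0 := by
          simp [Real.pi_ne_zero, I_ne_zero]
        have h3 : (theta k d A m j : ℂ) = (n : ℂ) := by
          apply mul_left_cancel₀ h2
          rw [mul_comm ((n:ℂ)) (2 * (π:ℂ) * I)] at hn
          linear_combination hn
        exact_mod_cast h3
      choose n hn using hint
      -- build a vanishing rational linear combination
      have hg := Fintype.linearIndependent_iff.mp hindep
        (Sum.elim (fun j : Fin d => (n j : ℚ)) (fun i : Fin k => -(m i : ℚ)))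
      have hzero : ∑ s : Fin d ⊕ Fin k,
          (Sum.elim (fun j : Fin d => (n j : ℚ)) (fun i : Fin k => -(m i : ℚ))) s •
            (Sum.elim (fun i : Fin d => (Pi.single i 1 : Fin d → ℝ))
              (fun j : Fin k => fun i : Fin d => A j i)) s = 0 := by
        rw [Fintype.sum_sum_type]
        funext j'
        simp only [Sum.elim_inl, Sum.elim_inr, Pi.add_apply, Finset.sum_apply,
          Pi.smul_apply, Rat.smul_def, Pi.zero_apply]
        push_cast
        have e1 : ∑ j, (n j : ℝ) * (Pi.single j 1 : Fin d → ℝ) j' = (n j' : ℝ) := by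
          rw [Finset.sum_eq_single j']
          · simp
          · intro b _ hb
            rw [Pi.single_eq_of_ne' hb]
            simp
          · simp
        have e2 : ∑ i, -(m i : ℝ) * A i j' = -(theta k d A m j') := by
          rw [theta, ← Finset.sum_neg_distrib]
          exact Finset.sum_congr rfl fun i _ => by ring
        rw [e1, e2, hn j']
        ring
      obtain ⟨i, hi⟩ : ∃ i, m i ≠ 0 := by
        by_contra hc2
        push_neg at hc2
        exact hm (funext hc2)
      have hgi := hg hzero (Sum.inr i)
      simp only [Sum.elim_inr, neg_eq_zero, Int.cast_eq_zero] at hgi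
      exact hi hgi
    obtain ⟨j₀, hj₀⟩ := hj
    -- squeeze
    rw [tendsto_zero_iff_norm_tendsto_zero]
    apply squeeze_zero (fun N => norm_nonneg _)
      (g := fun N : ℕ => ‖(((2*N+1 : ℕ)) : ℂ)⁻¹ * ∑ s ∈ Finset.Icc (-(N:ℤ)) N, (zc k d A m j₀) ^ s‖)
    · intro N
      rw [Lam_char, norm_prod]
      calc ∏ j, ‖(((2*N+1 : ℕ)) : ℂ)⁻¹ * ∑ s ∈ Finset.Icc (-(N:ℤ)) N, (zc k d A m j) ^ s‖
          = ‖(((2*N+1 : ℕ)) : ℂ)⁻¹ * ∑ s ∈ Finset.Icc (-(N:ℤ)) N, (zc k d A m j₀) ^ s‖ *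
            ∏ j ∈ Finset.univ.erase j₀,
              ‖(((2*N+1 : ℕ)) : ℂ)⁻¹ * ∑ s ∈ Finset.Icc (-(N:ℤ)) N, (zc k d A m j) ^ s‖ := by
            rw [← Finset.mul_prod_erase _ _ (Finset.mem_univ j₀)]
        _ ≤ ‖(((2*N+1 : ℕ)) : ℂ)⁻¹ * ∑ s ∈ Finset.Icc (-(N:ℤ)) N, (zc k d A m j₀) ^ s‖ * 1 := by
            exact mul_le_mul_of_nonneg_left
              (Finset.prod_le_one (fun j _ => norm_nonneg _)
                (fun j _ => norm_avg_le_one _ (norm_zc k d A m j) N))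
              (norm_nonneg _)
        _ = _ := mul_one _
    · rw [← tendsto_zero_iff_norm_tendsto_zero]
      exact avg_tendsto_zero _ (norm_zc k d A m j₀) hj₀

end Main
end TorusDensityAux

open TorusDensityAux MeasureTheory Complex
open scoped Real

attribute [local instance] fact_zero_lt_one_real

/-- Core density statement inside the proof of Theorem 3.1: if the standard
basis vectors `e₁,…,e_d` of `ℝ^d` together with the `k` rows of `A ∈ ℝ^{k×d}`
are ℚ-linearly independent, then `{A t mod ℤ^k : t ∈ ℤ^d}` is dense in `𝕋^k`. -/
theorem integer_image_dense_in_torus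
    (k d : ℕ) (hk : 0 < k) (hd : 0 < d)
    (A : Matrix (Fin k) (Fin d) ℝ)
    (hindep : LinearIndependent ℚ
      (Sum.elim (fun i : Fin d => (Pi.single i 1 : Fin d → ℝ))
        (fun j : Fin k => fun i : Fin d => A j i))) :
    DenseRange (fun t : Fin d → ℤ =>
      fun i : Fin k => ((A.mulVec (fun j => (t j : ℝ)) i : ℝ) : AddCircle (1 : ℝ))) := by
  classical
  show DenseRange (phi k d A)
  by_contra hden
  obtain ⟨x₀, hx₀⟩ : ∃ x₀ : Fin k → AddCircle (1:ℝ),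
      x₀ ∉ closure (Set.range (phi k d A)) := by
    by_contra hc
    push_neg at hc
    exact hden fun x => hc x
  -- Urysohn function
  obtain ⟨f, hf0, hf1, hf01⟩ := exists_continuous_zero_one_of_isClosed
    (isClosed_closure (s := Set.range (phi k d A))) isClosed_singleton
    (Set.disjoint_singleton_right.mpr hx₀)
  set F : C((Fin k → AddCircle (1:ℝ)), ℂ) :=
    ⟨fun x => (f x : ℂ), Complex.continuous_ofReal.comp f.continuous⟩ with hF
  have hfint : Integrable (fun x => f x) (volume : Measure (Fin k → AddCircle (1:ℝ))) :=
    f.continuous.integrable_of_hasCompactSupport (isClosed_tsupport _).isCompact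
  set ε : ℝ := ∫ x, f x with hε
  have hεpos : 0 < ε := by
    rw [hε, integral_pos_iff_support_of_nonneg (fun x => (hf01 x).1) hfint]
    have hopen : IsOpen (Function.support f) := by
      have : Function.support ⇑f = (⇑f) ⁻¹' ({0}ᶜ) := rfl
      rw [this]
      exact (isOpen_compl_singleton).preimage f.continuous
    refine hopen.measure_pos volume ⟨x₀, ?_⟩
    have : f x₀ = 1 := hf1 rfl
    simp [Function.mem_support, this]
  -- approximate F by a trigonometric polynomial
  have hFc : F ∈ (Submodule.span ℂ (Set.range (torusChar k))).topologicalClosure := by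
    rw [span_torusChar_closure_eq_top k]
    exact Submodule.mem_top
  have hmem : F ∈ closure ((Submodule.span ℂ (Set.range (torusChar k)) :
      Submodule ℂ C((Fin k → AddCircle (1:ℝ)), ℂ)) : Set _) := hFc
  obtain ⟨P, hP, hPF⟩ := Metric.mem_closure_iff.mp hmem (ε/3) (by positivity)
  obtain ⟨n, c, v, hv⟩ := mem_span_set'.mp hP
  set m' : Fin n → (Fin k → ℤ) := fun i => ((v i).2).choose with hm'def
  have hm' : ∀ i, torusChar k (m' i) = (v i : C((Fin k → AddCircle (1:ℝ)), ℂ)) :=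
    fun i => ((v i).2).choose_spec
  have hPeq : P = ∑ i, c i • torusChar k (m' i) := by
    rw [← hv]
    exact Finset.sum_congr rfl fun i _ => by rw [hm']
  set c₀ : ℂ := ∑ i, c i * (if m' i = 0 then 1 else 0) with hc₀
  -- integrals
  have hPint : ∫ x, P x = c₀ := by
    rw [hPeq, hc₀]
    have : ∀ x, (∑ i, c i • torusChar k (m' i)) x
        = ∑ i, c i * torusChar k (m' i) x := by
      intro x
      simp [ContinuousMap.sum_apply]
    simp only [this]
    rw [integral_finset_sum]
    · exact Finset.sum_congr rfl fun i _ => by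
        rw [integral_const_mul, integral_torusChar]
    · intro i _
      exact (Integrable.const_mul
        ((torusChar k (m' i)).continuous.integrable_of_hasCompactSupport
          (isClosed_tsupport _).isCompact) (c i))
  have hFint : ∫ x, F x = (ε : ℂ) := by
    rw [hF, hε]
    exact integral_ofReal
  have hFPint : Integrable (fun x => F x) (volume : Measure (Fin k → AddCircle (1:ℝ))) :=
    F.continuous.integrable_of_hasCompactSupport (isClosed_tsupport _).isCompact
  have hPint' : Integrable (fun x => P x) (volume : Measure (Fin k → AddCircle (1:ℝ))) :=
    P.continuous.integrable_of_hasCompactSupport (isClosed_tsupport _).isCompact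
  have hIapprox : ‖(ε : ℂ) - c₀‖ ≤ ε/3 := by
    rw [← hFint, ← hPint, ← integral_sub hFPint hPint']
    have hbd : ∀ x, ‖F x - P x‖ ≤ ε/3 := by
      intro x
      calc ‖F x - P x‖ = ‖(F - P) x‖ := by rw [ContinuousMap.sub_apply]
        _ ≤ ‖F - P‖ := (F - P).norm_coe_le_norm x
        _ = dist F P := (dist_eq_norm F P).symm
        _ ≤ ε/3 := le_of_lt hPF
    calc ‖∫ x, (F x - P x)‖ ≤ (ε/3) * (volume Set.univ).toReal :=
          norm_integral_le_of_norm_le_const (Filter.Eventually.of_forall hbd)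
      _ = ε/3 := by simp
  have hc₀big : 2*ε/3 ≤ ‖c₀‖ := by
    have h1 : ‖(ε:ℂ)‖ - ‖c₀‖ ≤ ‖(ε:ℂ) - c₀‖ := norm_sub_norm_le _ _
    have h2 : ‖(ε:ℂ)‖ = ε := by
      rw [Complex.norm_real]
      exact abs_of_pos hεpos
    linarith [hIapprox, h1, h2.symm ▸ h1]
  -- averages
  have hLamP : Filter.Tendsto (fun N => Lam k d A N P) Filter.atTop (nhds c₀) := by
    have heq : ∀ N, Lam k d A N P = ∑ i, c i * Lam k d A N (torusChar k (m' i)) := by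
      intro N
      rw [hPeq]
      exact Lam_sum k d A N n c _
    simp only [heq, hc₀]
    exact tendsto_finset_sum _ fun i _ =>
      (tendsto_Lam_char k d A (m' i) hindep).const_mul (c i)
  have hLamF : ∀ N, Lam k d A N F = 0 := by
    intro N
    rw [Lam]
    have : ∀ t ∈ box d N, F (phi k d A t) = 0 := by
      intro t _
      have h0 : f (phi k d A t) = 0 := hf0 (subset_closure (Set.mem_range_self t))
      simp [hF, h0]
    rw [Finset.sum_eq_zero this, mul_zero]
  have hLamPsmall : ∀ N, ‖Lam k d A N P‖ ≤ ε/3 := by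
    intro N
    have : Lam k d A N P = Lam k d A N (P - F) := by
      rw [Lam_sub, hLamF N, sub_zero]
    rw [this]
    calc ‖Lam k d A N (P - F)‖ ≤ ‖P - F‖ := norm_Lam_le k d A N _
      _ = dist P F := (dist_eq_norm P F).symm
      _ = dist F P := dist_comm _ _
      _ ≤ ε/3 := le_of_lt hPF
  have hc₀small : ‖c₀‖ ≤ ε/3 :=
    le_of_tendsto (hLamP.norm) (Filter.Eventually.of_forall hLamPsmall)
  linarith
end

section
/- Let k and d be positive integers, n = d + k, and let A be any k×d real matrix. Then the set {(t, A t) mod ℤ^n : t ∈ ℝ^d} is dense in the torus 𝕋^n if and only if the set {A t mod ℤ^k : t ∈ ℤ^d} is dense in the torus 𝕋^k. -/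
open Metric

private lemma addCircle_dist_mk_le (a b : ℝ) :
    dist ((a : ℝ) : AddCircle (1 : ℝ)) ((b : ℝ) : AddCircle (1 : ℝ)) ≤ |a - b| := by
  rw [dist_eq_norm, ← AddCircle.coe_sub]
  simpa [Real.norm_eq_abs] using QuotientAddGroup.norm_mk_le_norm (S := AddSubgroup.zmultiples (1 : ℝ)) (m := a - b)

private lemma addCircle_int_eq_zero (n : ℤ) : (((n : ℝ)) : AddCircle (1 : ℝ)) = 0 :=
  (AddCircle.coe_eq_zero_iff (1 : ℝ)).2 ⟨n, by simp⟩

/-- The equivalence from the first part of the proof of Theorem 3.1: the image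
of the slice `S = {(t, At) : t ∈ ℝ^d}` under the modulo map is dense in
`𝕋^n = 𝕋^d × 𝕋^k` if and only if `{At mod ℤ^k : t ∈ ℤ^d}` is dense in `𝕋^k`. -/
theorem slice_dense_iff_integer_image_dense
    (k d : ℕ) (hk : 0 < k) (hd : 0 < d)
    (A : Matrix (Fin k) (Fin d) ℝ) :
    DenseRange (fun t : Fin d → ℝ =>
      ((fun i : Fin d => ((t i : ℝ) : AddCircle (1 : ℝ))),
       (fun i : Fin k => ((A.mulVec t i : ℝ) : AddCircle (1 : ℝ))))) ↔
    DenseRange (fun t : Fin d → ℤ =>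
      fun i : Fin k => ((A.mulVec (fun j => (t j : ℝ)) i : ℝ) : AddCircle (1 : ℝ))) := by
  constructor
  · intro hS
    rw [Metric.denseRange_iff] at hS ⊢
    intro y ε hε
    set f : (Fin d → ℝ) →L[ℝ] (Fin k → ℝ) := LinearMap.toContinuousLinearMap A.mulVecLin
      with hf
    set C : ℝ := ‖f‖ + 1 with hC
    have hCpos : 0 < C := by positivity
    set δ : ℝ := min (ε / 2) ((ε / 2) / C) with hδdef
    have hδpos : 0 < δ := lt_min (by linarith) (by positivity)
    obtain ⟨t, ht⟩ := hS ((fun _ => (0 : AddCircle (1 : ℝ))), y) δ hδpos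
    rw [Prod.dist_eq, max_lt_iff] at ht
    obtain ⟨ht1, ht2⟩ := ht
    set m : Fin d → ℤ := fun i => round (t i) with hm
    set s : Fin d → ℝ := t - fun i => ((m i : ℝ)) with hs
    have hsnorm : ‖s‖ < δ := by
      rw [pi_norm_lt_iff hδpos]
      intro i
      have hi : dist ((0 : AddCircle (1 : ℝ))) ((t i : ℝ) : AddCircle (1 : ℝ)) < δ :=
        (dist_le_pi_dist _ _ i).trans_lt ht1
      rw [dist_comm, dist_zero_right, AddCircle.norm_eq] at hi
      have hsi : s i = t i - (round (t i) : ℝ) := rfl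
      rw [hsi, Real.norm_eq_abs]
      simpa using hi
    have hAs : ‖A.mulVec s‖ < ε / 2 := by
      have h1 : ‖A.mulVec s‖ ≤ ‖f‖ * ‖s‖ := by
        simpa [hf, Matrix.mulVecLin_apply] using f.le_opNorm s
      have h2 : ‖f‖ * ‖s‖ < C * δ :=
        calc ‖f‖ * ‖s‖ ≤ C * ‖s‖ :=
              mul_le_mul_of_nonneg_right (by simp [hC]) (norm_nonneg s)
          _ < C * δ := mul_lt_mul_of_pos_left hsnorm hCpos
      have h3 : C * δ ≤ ε / 2 := by
        have hle : δ ≤ (ε / 2) / C := min_le_right _ _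
        calc C * δ ≤ C * ((ε / 2) / C) := mul_le_mul_of_nonneg_left hle hCpos.le
          _ = ε / 2 := by rw [mul_comm, div_mul_cancel₀ _ hCpos.ne']
      exact lt_of_le_of_lt h1 (lt_of_lt_of_le h2 h3)
    refine ⟨m, ?_⟩
    rw [dist_pi_lt_iff hε]
    intro i
    have hti : dist (y i) ((A.mulVec t i : ℝ) : AddCircle (1 : ℝ)) < δ :=
      (dist_le_pi_dist _ _ i).trans_lt ht2
    have hsub : A.mulVec s i = A.mulVec t i - A.mulVec (fun j => ((m j : ℝ))) i := by
      rw [hs, Matrix.mulVec_sub]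
      rfl
    have hdist2 : dist ((A.mulVec t i : ℝ) : AddCircle (1 : ℝ))
        ((A.mulVec (fun j => ((m j : ℝ))) i : ℝ) : AddCircle (1 : ℝ)) < ε / 2 := by
      refine (addCircle_dist_mk_le _ _).trans_lt ?_
      rw [← hsub]
      have hcoord : |A.mulVec s i| ≤ ‖A.mulVec s‖ := by
        simpa [Real.norm_eq_abs] using norm_le_pi_norm (A.mulVec s) i
      exact hcoord.trans_lt hAs
    calc dist (y i) ((A.mulVec (fun j => ((m j : ℝ))) i : ℝ) : AddCircle (1 : ℝ))
        ≤ dist (y i) ((A.mulVec t i : ℝ) : AddCircle (1 : ℝ))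
            + dist ((A.mulVec t i : ℝ) : AddCircle (1 : ℝ))
              ((A.mulVec (fun j => ((m j : ℝ))) i : ℝ) : AddCircle (1 : ℝ)) :=
          dist_triangle _ _ _
      _ < δ + ε / 2 := add_lt_add hti hdist2
      _ ≤ ε / 2 + ε / 2 := by
          have := min_le_left (ε / 2) ((ε / 2) / C)
          linarith
      _ = ε := by ring
  · intro hZ
    rw [Metric.denseRange_iff] at hZ ⊢
    rintro ⟨x, y⟩ ε hε
    choose xt hxt using fun i => QuotientAddGroup.mk_surjective (x i)
    obtain ⟨m, hmd⟩ := hZ (fun i => y i - (((A.mulVec xt i : ℝ)) : AddCircle (1 : ℝ))) ε hε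
    refine ⟨xt + fun j => ((m j : ℝ)), ?_⟩
    rw [Prod.dist_eq, max_lt_iff]
    constructor
    · have hx : (fun i : Fin d => (((xt + fun j => ((m j : ℝ))) i : ℝ) : AddCircle (1 : ℝ)))
          = x := by
        funext i
        have : ((xt + fun j => ((m j : ℝ))) i : ℝ) = xt i + (m i : ℝ) := rfl
        rw [this, AddCircle.coe_add, addCircle_int_eq_zero, add_zero]
        exact hxt i
      simp only [hx]
      simpa using hε
    · rw [dist_pi_lt_iff hε]
      intro i
      have hmi : dist (y i - (((A.mulVec xt i : ℝ)) : AddCircle (1 : ℝ)))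
          ((A.mulVec (fun j => ((m j : ℝ))) i : ℝ) : AddCircle (1 : ℝ)) < ε :=
        (dist_le_pi_dist _ _ i).trans_lt hmd
      have hsplit : A.mulVec (xt + fun j => ((m j : ℝ))) i
          = A.mulVec xt i + A.mulVec (fun j => ((m j : ℝ))) i := by
        rw [Matrix.mulVec_add]
        rfl
      show dist (y i) ((A.mulVec (xt + fun j => ((m j : ℝ))) i : ℝ) : AddCircle (1 : ℝ)) < ε
      rw [hsplit, AddCircle.coe_add]
      have heq : dist (y i)
          ((((A.mulVec xt i : ℝ)) : AddCircle (1 : ℝ))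
            + ((A.mulVec (fun j => ((m j : ℝ))) i : ℝ) : AddCircle (1 : ℝ)))
          = dist (y i - (((A.mulVec xt i : ℝ)) : AddCircle (1 : ℝ)))
            (((A.mulVec (fun j => ((m j : ℝ))) i : ℝ) : AddCircle (1 : ℝ))) := by
        rw [dist_eq_norm, dist_eq_norm]
        congr 1
        abel
      rw [heq]
      exact hmi
end

section
/- Let α₁,…,α_k be real numbers such that 1, α₁,…,α_k are linearly independent over ℚ. Then the set {(m α₁, …, m α_k) mod ℤ^k : m ∈ ℤ} is dense in the torus 𝕋^k. -/
open MeasureTheory Filter Complex Set Submodule AddCircle Finset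
open scoped Real ComplexConjugate Topology

noncomputable section

namespace KroneckerAux

variable {k : ℕ}

abbrev 𝕏 (k : ℕ) := Fin k → AddCircle (1 : ℝ)

instance : IsProbabilityMeasure (volume : Measure (AddCircle (1 : ℝ))) :=
  ⟨by rw [AddCircle.measure_univ]; simp⟩

/-- The character on the `k`-torus attached to `n : Fin k → ℤ`. -/
def chi (n : Fin k → ℤ) : C(𝕏 k, ℂ) :=
  ∏ i, (fourier (n i)).comp ⟨fun y => y i, continuous_apply i⟩

lemma chi_apply (n : Fin k → ℤ) (y : 𝕏 k) : chi n y = ∏ i, fourier (n i) (y i) := by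
  simp [chi, ContinuousMap.prod_apply]

lemma chi_zero : chi (0 : Fin k → ℤ) = 1 := by
  ext y; simp [chi_apply, fourier_zero]

lemma chi_mul (m n : Fin k → ℤ) : chi m * chi n = chi (m + n) := by
  ext y
  simp only [chi_apply, ContinuousMap.mul_apply, Pi.add_apply, ← Finset.prod_mul_distrib]
  exact Finset.prod_congr rfl fun i _ => (fourier_add (m := m i) (n := n i)).symm

lemma chi_star (n : Fin k → ℤ) : star (chi n) = chi (-n) := by
  ext y
  simp only [chi_apply, ContinuousMap.star_apply, Pi.neg_apply]
  rw [show (star (∏ i, fourier (n i) (y i)) : ℂ) = conj (∏ i, fourier (n i) (y i)) from rfl,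
    map_prod]
  exact Finset.prod_congr rfl fun i _ => (fourier_neg (n := n i)).symm

/-- The star subalgebra generated by the characters. -/
def chiSubalgebra (k : ℕ) : StarSubalgebra ℂ C(𝕏 k, ℂ) where
  toSubalgebra := Algebra.adjoin ℂ (Set.range (chi (k := k)))
  star_mem' := by
    intro a ha
    rw [Subalgebra.mem_carrier] at ha ⊢
    induction ha using Algebra.adjoin_induction with
    | mem x hx =>
      obtain ⟨n, rfl⟩ := hx
      rw [chi_star]
      exact Algebra.subset_adjoin ⟨-n, rfl⟩
    | algebraMap r =>
      have : star ((algebraMap ℂ C(𝕏 k, ℂ)) r) = (algebraMap ℂ C(𝕏 k, ℂ)) (starRingEnd ℂ r) := by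
        ext y
        simp [Algebra.algebraMap_eq_smul_one, Complex.star_def]
      rw [this]
      exact Subalgebra.algebraMap_mem _ _
    | add x y _ _ ihx ihy => rw [star_add]; exact add_mem ihx ihy
    | mul x y _ _ ihx ihy => rw [star_mul]; exact mul_mem ihy ihx

lemma chiSubalgebra_coe :
    Subalgebra.toSubmodule (chiSubalgebra k).toSubalgebra
      = span ℂ (Set.range (chi (k := k))) := by
  apply Algebra.adjoin_eq_span_of_subset
  refine Subset.trans ?_ Submodule.subset_span
  intro x hx
  refine Submonoid.closure_induction (fun _ => id) ⟨0, chi_zero⟩ ?_ hx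
  rintro - - - - ⟨m, rfl⟩ ⟨n, rfl⟩
  exact ⟨m + n, (chi_mul m n).symm⟩

lemma chiSubalgebra_separatesPoints : (chiSubalgebra k).SeparatesPoints := by
  intro x y hxy
  obtain ⟨i, hi⟩ : ∃ i, x i ≠ y i := by
    by_contra h; push_neg at h; exact hxy (funext h)
  refine ⟨_, ⟨chi (Pi.single i 1), Algebra.subset_adjoin ⟨_, rfl⟩, rfl⟩, ?_⟩
  have key : ∀ z : 𝕏 k, chi (Pi.single i 1) z = toCircle (z i) := by
    intro z
    rw [chi_apply, Finset.prod_eq_single i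
      (fun b _ hb => by rw [Pi.single_eq_of_ne hb]; exact fourier_zero)
      (fun h => absurd (Finset.mem_univ i) h)]
    rw [Pi.single_eq_same, fourier_one]
  dsimp only
  rw [key, key]
  intro h
  rw [Circle.coe_inj] at h
  exact hi (injective_toCircle one_ne_zero h)

lemma chiSubalgebra_closure_eq_top : (chiSubalgebra k).topologicalClosure = ⊤ :=
  ContinuousMap.starSubalgebra_topologicalClosure_eq_top_of_separatesPoints _
    chiSubalgebra_separatesPoints

lemma span_chi_closure_eq_top :
    (span ℂ (Set.range (chi (k := k)))).topologicalClosure = ⊤ := by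
  rw [← chiSubalgebra_coe]
  exact congr_arg (Subalgebra.toSubmodule <| StarSubalgebra.toSubalgebra ·)
    chiSubalgebra_closure_eq_top

lemma integrable_cm (f : C(𝕏 k, ℂ)) : Integrable f (volume : Measure (𝕏 k)) :=
  f.continuous.integrable_of_hasCompactSupport (HasCompactSupport.of_compactSpace f)

lemma integral_chi_eq_zero {n : Fin k → ℤ} (hn : n ≠ 0) :
    ∫ y : 𝕏 k, chi n y = 0 := by
  obtain ⟨j, hj⟩ : ∃ j, n j ≠ 0 := by
    by_contra h; push_neg at h; exact hn (funext h)
  set a : 𝕏 k := Function.update (0 : 𝕏 k) j ((1 / 2 / (n j : ℝ) : ℝ) : AddCircle (1:ℝ)) with ha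
  have key : ∀ y : 𝕏 k, chi n (y + a) = - chi n y := by
    intro y
    have hfadd : ∀ (m : ℤ) (x t : AddCircle (1:ℝ)),
        fourier m (x + t) = fourier m x * fourier m t := by
      intro m x t
      simp only [fourier_apply, smul_add, toCircle_add, Circle.coe_mul]
    have expand : chi n (y + a) = (∏ i, fourier (n i) (y i)) * (∏ i, fourier (n i) (a i)) := by
      rw [chi_apply, ← Finset.prod_mul_distrib]
      exact Finset.prod_congr rfl fun i _ => hfadd (n i) (y i) (a i)
    have hprod : (∏ i, fourier (n i) (a i)) = -1 := by
      rw [Finset.prod_eq_single j (fun b _ hb => by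
          rw [ha]; simp only [Function.update_of_ne hb, Pi.zero_apply]
          exact fourier_eval_zero (n b))
        (fun h => absurd (Finset.mem_univ j) h)]
      have h2 := fourier_add_half_inv_index hj one_pos (0 : AddCircle (1:ℝ))
      rw [zero_add] at h2
      rw [ha, Function.update_self, h2, fourier_eval_zero]
    rw [expand, hprod, ← chi_apply]
    ring
  have h1 : ∫ y : 𝕏 k, chi n y = ∫ y : 𝕏 k, chi n (y + a) :=
    (integral_add_right_eq_self (fun y : 𝕏 k => chi n y) a).symm
  have h2 : ∫ y : 𝕏 k, chi n (y + a) = - ∫ y : 𝕏 k, chi n y := by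
    simp_rw [key]; exact integral_neg _
  have h3 : ∫ y : 𝕏 k, chi n y = - ∫ y : 𝕏 k, chi n y := h1.trans h2
  have h4 : (∫ y : 𝕏 k, chi n y) + (∫ y : 𝕏 k, chi n y) = 0 := by
    linear_combination h3
  exact add_self_eq_zero.mp h4

section orbit

variable (α : Fin k → ℝ)

/-- The orbit point `(mα₁, …, mα_k)`. -/
def P (m : ℤ) : 𝕏 k := fun i => (((m : ℝ) * α i : ℝ) : AddCircle (1:ℝ))

lemma chi_P (n : Fin k → ℤ) (m : ℤ) :
    chi n (P α m) = exp (2 * π * I * ((∑ i, (n i : ℝ) * α i : ℝ) : ℂ)) ^ m := by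
  rw [chi_apply]
  have h1 : ∀ i, fourier (n i) ((P α m) i)
      = exp (2 * π * I * (n i) * ((((m : ℝ) * α i : ℝ)) : ℂ) / (((1:ℝ)) : ℂ)) :=
    fun i => fourier_coe_apply
  rw [Finset.prod_congr rfl fun i _ => h1 i, ← Complex.exp_sum, ← Complex.exp_int_mul]
  congr 1
  push_cast
  simp only [Finset.mul_sum]
  refine Finset.sum_congr rfl fun i _ => ?_
  ring

/-- The Birkhoff average of `g` along the orbit. -/
def avg (g : C(𝕏 k, ℂ)) (N : ℕ) : ℂ := (N : ℂ)⁻¹ * ∑ m ∈ Finset.range N, g (P α m)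

lemma theta_not_int (hindep : LinearIndependent ℚ (Fin.cons (1 : ℝ) α : Fin (k + 1) → ℝ))
    {n : Fin k → ℤ} (hn : n ≠ 0) (c : ℤ) : (∑ i, (n i : ℝ) * α i) ≠ (c : ℝ) := by
  intro h
  have hall := Fintype.linearIndependent_iff.mp hindep
  have hsm : ∀ (q : ℚ) (x : ℝ), q • x = (q : ℝ) * x := fun q x => Rat.smul_def q x
  set q : Fin (k + 1) → ℚ := Fin.cons (-c : ℚ) (fun i => (n i : ℚ)) with hq
  have hzero : ∑ i, q i • (Fin.cons (1 : ℝ) α : Fin (k + 1) → ℝ) i = 0 := by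
    rw [Fin.sum_univ_succ, hq]
    simp only [Fin.cons_zero, Fin.cons_succ, hsm]
    push_cast
    rw [h]
    ring
  have hc := hall q hzero
  apply hn
  funext i
  have h2 := hc i.succ
  rw [hq, Fin.cons_succ] at h2
  exact_mod_cast h2

lemma tendsto_avg_chi (hindep : LinearIndependent ℚ (Fin.cons (1 : ℝ) α : Fin (k + 1) → ℝ))
    (n : Fin k → ℤ) :
    Tendsto (avg α (chi n)) atTop (𝓝 (∫ y : 𝕏 k, chi n y)) := by
  by_cases hn : n = 0
  · subst hn
    have hint : ∫ y : 𝕏 k, chi (0 : Fin k → ℤ) y = 1 := by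
      rw [chi_zero]
      simp [ContinuousMap.one_apply]
    rw [hint]
    apply Tendsto.congr' (f₁ := fun _ => (1 : ℂ)) _ tendsto_const_nhds
    filter_upwards [eventually_ge_atTop 1] with N hN
    have hN' : (N : ℂ) ≠ 0 := Nat.cast_ne_zero.mpr (by omega)
    simp [avg, chi_zero, ContinuousMap.one_apply, Finset.sum_const, hN',
      inv_mul_cancel₀]
  · set θ : ℝ := ∑ i, (n i : ℝ) * α i with hθ
    set z : ℂ := exp (2 * π * I * (θ : ℂ)) with hz
    have hz1 : z ≠ 1 := by
      intro hone
      rw [hz, Complex.exp_eq_one_iff] at hone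
      obtain ⟨c, hc⟩ := hone
      have h2πI : (2 : ℂ) * π * I ≠ 0 := by
        simp [Real.pi_ne_zero, Complex.I_ne_zero]
      have hθc : (θ : ℂ) = (c : ℂ) := by
        have h5 : (θ : ℂ) * (2 * π * I) = (c : ℂ) * (2 * π * I) := by
          linear_combination hc
        exact mul_right_cancel₀ h2πI h5
      exact theta_not_int α hindep hn c (by exact_mod_cast hθc)
    have hznorm : ∀ N : ℕ, ‖z ^ N‖ = 1 := by
      intro N
      rw [norm_pow, hz,
        show (2 : ℂ) * π * I * (θ : ℂ) = ((2 * π * θ : ℝ) : ℂ) * I by push_cast; ring,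
        Complex.norm_exp_ofReal_mul_I, one_pow]
    have hint : ∫ y : 𝕏 k, chi n y = 0 := integral_chi_eq_zero hn
    rw [hint]
    refine squeeze_zero_norm (fun N : ℕ => ?_)
      (tendsto_const_div_atTop_nhds_zero_nat (2 / ‖z - 1‖))
    · 
      have hzpos : (0:ℝ) < ‖z - 1‖ := norm_pos_iff.mpr (sub_ne_zero.mpr hz1)
      have havg : avg α (chi n) N = (N : ℂ)⁻¹ * ((z ^ N - 1) / (z - 1)) := by
        rw [avg]
        congr 1
        rw [← geom_sum_eq hz1]
        refine Finset.sum_congr rfl fun m _ => ?_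
        rw [chi_P, ← hθ, ← hz, zpow_natCast]
      have hb : ‖z ^ N - 1‖ ≤ 2 := by
        calc ‖z ^ N - 1‖ ≤ ‖z ^ N‖ + ‖(1 : ℂ)‖ := norm_sub_le _ _
          _ = 2 := by rw [hznorm, norm_one]; norm_num
      calc ‖avg α (chi n) N‖ = (N : ℝ)⁻¹ * (‖z ^ N - 1‖ / ‖z - 1‖) := by
            rw [havg, norm_mul, norm_div, norm_inv, RCLike.norm_natCast]
        _ ≤ (N : ℝ)⁻¹ * (2 / ‖z - 1‖) := by gcongr
        _ = 2 / ‖z - 1‖ / N := by rw [div_div]; ring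

lemma tendsto_avg (hindep : LinearIndependent ℚ (Fin.cons (1 : ℝ) α : Fin (k + 1) → ℝ))
    (g : C(𝕏 k, ℂ)) (hg : g ∈ span ℂ (Set.range (chi (k := k)))) :
    Tendsto (avg α g) atTop (𝓝 (∫ y : 𝕏 k, g y)) := by
  induction hg using Submodule.span_induction with
  | mem x hx =>
    obtain ⟨n, rfl⟩ := hx
    exact tendsto_avg_chi α hindep n
  | zero =>
    have : avg α (0 : C(𝕏 k, ℂ)) = fun _ => 0 := by
      funext N; simp [avg]
    rw [this]
    simpa using (tendsto_const_nhds : Tendsto (fun _ : ℕ => (0:ℂ)) atTop (𝓝 0))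
  | add x y hx hy ihx ihy =>
    have h1 : avg α (x + y) = fun N => avg α x N + avg α y N := by
      funext N
      simp [avg, Finset.sum_add_distrib, mul_add]
    have h2 : ∫ w : 𝕏 k, (x + y) w = (∫ w : 𝕏 k, x w) + ∫ w : 𝕏 k, y w := by
      simp only [ContinuousMap.add_apply]
      exact integral_add (integrable_cm x) (integrable_cm y)
    rw [h1, h2]
    exact ihx.add ihy
  | smul c x hx ihx =>
    have h1 : avg α (c • x) = fun N => c * avg α x N := by
      funext N
      simp only [avg, ContinuousMap.smul_apply, smul_eq_mul, Finset.mul_sum]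
      exact Finset.sum_congr rfl fun m _ => by ring
    have h2 : ∫ w : 𝕏 k, (c • x) w = c * ∫ w : 𝕏 k, x w := by
      simp only [ContinuousMap.smul_apply, smul_eq_mul]
      rw [← integral_const_mul]
    rw [h1, h2]
    exact ihx.const_mul c

end orbit

end KroneckerAux

open KroneckerAux MeasureTheory Filter Complex Set Submodule Topology in
/-- **k-variable Kronecker theorem** (Lemma 3.3): if `1, α₁, …, α_k` are
ℚ-linearly independent real numbers, then `{(mα₁,…,mα_k) mod ℤ^k : m ∈ ℤ}`
is dense in the torus `𝕋^k`. -/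
theorem kronecker_dense
    (k : ℕ) (α : Fin k → ℝ)
    (hindep : LinearIndependent ℚ (Fin.cons (1 : ℝ) α : Fin (k + 1) → ℝ)) :
    DenseRange (fun m : ℤ =>
      fun i : Fin k => (((m : ℝ) * α i : ℝ) : AddCircle (1 : ℝ))) := by
  by_contra hdr
  rw [DenseRange, dense_iff_closure_eq] at hdr
  have hne : (closure (Set.range (fun m : ℤ =>
      fun i : Fin k => (((m : ℝ) * α i : ℝ) : AddCircle (1 : ℝ)))))ᶜ.Nonempty := by
    rw [Set.nonempty_compl]
    intro h; exact hdr h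
  obtain ⟨y, hy⟩ := hne
  set F : ℤ → 𝕏 k := fun m => fun i : Fin k => (((m : ℝ) * α i : ℝ) : AddCircle (1 : ℝ)) with hF
  set S : Set (𝕏 k) := closure (Set.range F) with hS
  have hSclosed : IsClosed S := isClosed_closure
  have hdisj : Disjoint S {y} := Set.disjoint_singleton_right.mpr hy
  obtain ⟨f, hf0, hf1, hf01⟩ :=
    exists_continuous_zero_one_of_isClosed hSclosed isClosed_singleton hdisj
  set gC : C(𝕏 k, ℂ) := ⟨fun x => ((f x : ℝ) : ℂ), Complex.continuous_ofReal.comp f.continuous⟩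
    with hgC
  have hfint : Integrable f (volume : Measure (𝕏 k)) :=
    f.continuous.integrable_of_hasCompactSupport (HasCompactSupport.of_compactSpace f)
  set Iv : ℝ := ∫ x : 𝕏 k, f x with hIv
  have hIpos : 0 < Iv := by
    rw [hIv]
    rw [integral_pos_iff_support_of_nonneg (fun x => (hf01 x).1) hfint]
    apply (f.continuous.isOpen_support).measure_pos volume
    exact ⟨y, by simp [Function.mem_support, hf1 rfl]⟩
  have hIC : ∫ x : 𝕏 k, gC x = (Iv : ℂ) := by
    rw [hgC, hIv]
    exact integral_ofReal
  -- approximate gC by an element of the span of characters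
  have hmem : gC ∈ closure ((span ℂ (Set.range (chi (k := k)))) : Set C(𝕏 k, ℂ)) := by
    rw [← Submodule.topologicalClosure_coe, span_chi_closure_eq_top]
    trivial
  have hε : 0 < Iv / 3 := by linarith
  obtain ⟨h, hhmem, hdist⟩ := Metric.mem_closure_iff.mp hmem (Iv / 3) hε
  -- the bump vanishes on the orbit
  have horbit : ∀ m : ℤ, gC (P α m) = 0 := by
    intro m
    have hPm : P α m ∈ S := subset_closure ⟨m, rfl⟩
    have := hf0 hPm
    simp only [hgC, ContinuousMap.coe_mk]
    rw [show f (P α m) = 0 from this]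
    simp
  -- uniform norm bound
  have hnorm : ∀ x : 𝕏 k, ‖gC x - h x‖ ≤ Iv / 3 := by
    intro x
    calc ‖gC x - h x‖ = ‖(gC - h) x‖ := by simp
      _ ≤ ‖gC - h‖ := ContinuousMap.norm_coe_le_norm _ x
      _ = dist gC h := (dist_eq_norm gC h).symm
      _ ≤ Iv / 3 := le_of_lt hdist
  -- averages of h are small
  have havgbound : ∀ N : ℕ, 1 ≤ N → ‖avg α h N‖ ≤ Iv / 3 := by
    intro N hN
    have hNpos : (0:ℝ) < N := by exact_mod_cast hN
    have : avg α h N = (N : ℂ)⁻¹ * ∑ m ∈ Finset.range N, (h (P α m) - gC (P α m)) := by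
      rw [avg]
      congr 1
      exact Finset.sum_congr rfl fun m _ => by rw [horbit]; ring
    rw [this, norm_mul, norm_inv, RCLike.norm_natCast]
    have hsum : ‖∑ m ∈ Finset.range N, (h (P α m) - gC (P α m))‖ ≤ N * (Iv / 3) := by
      calc ‖∑ m ∈ Finset.range N, (h (P α m) - gC (P α m))‖
          ≤ ∑ m ∈ Finset.range N, ‖h (P α m) - gC (P α m)‖ := norm_sum_le _ _
        _ ≤ ∑ _m ∈ Finset.range N, (Iv / 3) := by
            refine Finset.sum_le_sum fun m _ => ?_
            rw [norm_sub_rev]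
            exact hnorm _
        _ = N * (Iv / 3) := by rw [Finset.sum_const, Finset.card_range]; simp
    calc (N : ℝ)⁻¹ * ‖∑ m ∈ Finset.range N, (h (P α m) - gC (P α m))‖
        ≤ (N : ℝ)⁻¹ * (N * (Iv / 3)) := by
          apply mul_le_mul_of_nonneg_left hsum (by positivity)
      _ = Iv / 3 := by field_simp
  -- limit of averages of h
  have hlim := tendsto_avg α hindep h hhmem
  have hIh : ‖∫ w : 𝕏 k, h w‖ ≤ Iv / 3 := by
    apply le_of_tendsto hlim.norm
    filter_upwards [eventually_ge_atTop 1] with N hN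
    exact havgbound N hN
  -- integrals are close
  have hIdiff : ‖(∫ w : 𝕏 k, gC w) - ∫ w : 𝕏 k, h w‖ ≤ Iv / 3 := by
    rw [← integral_sub (integrable_cm gC) (integrable_cm h)]
    have := norm_integral_le_of_norm_le_const
      (μ := (volume : Measure (𝕏 k))) (C := Iv / 3)
      (Filter.Eventually.of_forall fun x => hnorm x)
    simpa using this
  have : Iv ≤ 2 * (Iv / 3) := by
    have h5 : ‖∫ w : 𝕏 k, gC w‖ ≤ Iv / 3 + Iv / 3 :=
      calc ‖∫ w : 𝕏 k, gC w‖
          ≤ ‖(∫ w : 𝕏 k, gC w) - ∫ w : 𝕏 k, h w‖ + ‖∫ w : 𝕏 k, h w‖ := by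
            simpa using norm_add_le ((∫ w : 𝕏 k, gC w) - ∫ w : 𝕏 k, h w) (∫ w : 𝕏 k, h w)
        _ ≤ Iv / 3 + Iv / 3 := add_le_add hIdiff hIh
    have h6 : ‖∫ w : 𝕏 k, gC w‖ = Iv := by
      rw [hIC, Complex.norm_real, Real.norm_eq_abs, abs_of_pos hIpos]
    linarith [h6 ▸ h5]
  linarith
end
end

section
/- Let k ≥ 2 and k' ≥ 1 be integers and let a₁,…,a_{k'} ∈ ℝ^k be vectors such that the k + k' vectors e₁,…,e_k, a₁,…,a_{k'} are linearly independent over ℚ, where e₁,…,e_k is the standard basis of ℝ^k. Let J ⊆ {1,…,k'} be the set of indices i for which the k-th coordinate of aᵢ is a rational number, and for i ∈ J let aᵢ' ∈ ℝ^{k−1} be the vector of the first k−1 coordinates of aᵢ. Then the vectors e₁,…,e_{k−1} ∈ ℝ^{k−1} together with the vectors aᵢ' for i ∈ J are linearly independent over ℚ. -/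
lemma dite_sum_subtype {α M : Type*} [Fintype α] [AddCommMonoid M]
    (P : α → Prop) [DecidablePred P] (c : Subtype P → M) :
    (∑ i : α, if h : P i then c ⟨i, h⟩ else 0) = ∑ i : Subtype P, c i := by
  rw [← Fintype.sum_subtype_add_sum_subtype P (fun i => if h : P i then c ⟨i, h⟩ else 0)]
  have h1 : ∀ x : Subtype P, (if h : P x.1 then c ⟨x.1, h⟩ else 0) = c x := fun x => by
    rw [dif_pos x.2]
  have h2 : ∀ x : {x // ¬ P x}, (if h : P x.1 then c ⟨x.1, h⟩ else 0) = (0 : M) :=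
    fun x => dif_neg x.2
  simp only [h1, h2, Finset.sum_const_zero, add_zero]

/-- Linear-algebra claim from Cases 1 and 2 of the inductive proof of
Theorem 3.1: if `e₁,…,e_k, a₁,…,a_{k'}` are ℚ-linearly independent in `ℝ^k`,
and `J` is the set of indices `i` whose `k`-th coordinate `aᵢ(k)` is rational,
then the standard basis of `ℝ^{k-1}` together with the truncations (first
`k-1` coordinates) of the `aᵢ`, `i ∈ J`, are ℚ-linearly independent. -/
theorem truncated_rows_linearIndependent
    (k k' : ℕ) (hk : 2 ≤ k) (hk' : 1 ≤ k')
    (a : Fin k' → (Fin k → ℝ))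
    (hindep : LinearIndependent ℚ
      (Sum.elim (fun i : Fin k => (Pi.single i 1 : Fin k → ℝ)) a)) :
    LinearIndependent ℚ
      (Sum.elim (fun j : Fin (k - 1) => (Pi.single j 1 : Fin (k - 1) → ℝ))
        (fun i : {i : Fin k' // ∃ q : ℚ, a i ⟨k - 1, by omega⟩ = (q : ℝ)} =>
          fun j : Fin (k - 1) => a i (Fin.castLE (Nat.sub_le k 1) j))) := by
  classical
  set last : Fin k := ⟨k - 1, by omega⟩ with hlast
  set P : Fin k' → Prop := fun i => ∃ q : ℚ, a i last = (q : ℝ) with hP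
  set q : Subtype P → ℚ := fun i => Classical.choose i.2 with hq
  have hqa : ∀ i : Subtype P, a i.1 last = (q i : ℝ) := fun i => Classical.choose_spec i.2
  rw [Fintype.linearIndependent_iff] at hindep ⊢
  intro g hg
  -- coordinate-wise statement of hg
  have hg' : ∀ y : Fin (k - 1),
      (g (Sum.inl y) : ℝ) +
        ∑ i : Subtype P, (g (Sum.inr i) : ℝ) * a i.1 (Fin.castLE (Nat.sub_le k 1) y) = 0 := by
    intro y
    have h0 := congrFun hg y
    simpa [Finset.sum_apply, Fintype.sum_sum_type, Pi.single_apply, Rat.smul_def,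
      mul_ite, Finset.sum_ite_eq', Finset.mem_univ] using h0
  set G : Fin k ⊕ Fin k' → ℚ := fun s =>
    Sum.elim
      (fun j : Fin k => if h : (j : ℕ) < k - 1 then g (Sum.inl ⟨j, h⟩)
        else -∑ i : Subtype P, g (Sum.inr i) * q i)
      (fun i : Fin k' => if h : P i then g (Sum.inr ⟨i, h⟩) else 0) s with hGdef
  have key : ∀ s, G s = 0 := by
    apply hindep
    funext x
    rw [Pi.zero_apply]
    have hx : (∑ s : Fin k ⊕ Fin k', G s • Sum.elim
        (fun i : Fin k => (Pi.single i 1 : Fin k → ℝ)) a s) x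
        = (G (Sum.inl x) : ℝ) + ∑ i : Fin k', (G (Sum.inr i) : ℝ) * a i x := by
      simp [Finset.sum_apply, Fintype.sum_sum_type, Pi.single_apply, Rat.smul_def,
        mul_ite, Finset.sum_ite_eq', Finset.mem_univ]
    rw [hx]
    have hsub : ∑ i : Fin k', (G (Sum.inr i) : ℝ) * a i x
        = ∑ i : Subtype P, (g (Sum.inr i) : ℝ) * a i.1 x := by
      rw [← dite_sum_subtype P (fun i => (g (Sum.inr i) : ℝ) * a i.1 x)]
      apply Finset.sum_congr rfl
      intro i _
      simp only [hGdef, Sum.elim_inr]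
      split <;> simp
    rw [hsub]
    by_cases hxk : (x : ℕ) < k - 1
    · have hcast : Fin.castLE (Nat.sub_le k 1) (⟨(x : ℕ), hxk⟩ : Fin (k - 1)) = x := by
        apply Fin.ext; rfl
      have := hg' ⟨(x : ℕ), hxk⟩
      rw [hcast] at this
      simp only [hGdef, Sum.elim_inl, dif_pos hxk]
      convert this using 3
    · have hxlast : x = last := by
        apply Fin.ext
        have := x.isLt
        simp only [hlast]
        omega
      subst hxlast
      simp only [hGdef, Sum.elim_inl, dif_neg hxk]
      have : ∀ i : Subtype P, (g (Sum.inr i) : ℝ) * a i.1 last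
          = ((g (Sum.inr i) * q i : ℚ) : ℝ) := by
        intro i; rw [hqa i]; push_cast; ring
      rw [Finset.sum_congr rfl (fun i _ => this i)]
      push_cast
      ring
  intro s
  cases s with
  | inl y =>
      have := key (Sum.inl (Fin.castLE (Nat.sub_le k 1) y))
      simp only [hGdef, Sum.elim_inl, Fin.coe_castLE] at this
      rw [dif_pos y.isLt] at this
      simpa using this
  | inr i =>
      have := key (Sum.inr i.1)
      simp only [hGdef, Sum.elim_inr] at this
      rw [dif_pos i.2] at this
      simpa using this
end

section
/- Let k and d be positive integers, A a k×d real matrix, ε a real number with 0 < ε < 1/2, and T₁,…,T_d nonnegative integers. Suppose that for every point r₀ of the torus 𝕋^k there exists t ∈ ℤ^d with 0 ≤ tᵢ ≤ Tᵢ for every i such that the distance in 𝕋^k (the maximum over coordinates of the AddCircle distances) between the class of A t and r₀ is at most ε. Then ∏_{i=1}^d (Tᵢ + 1) ≥ (2ε)^{−k}. -/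
open MeasureTheory Set
open scoped ENNReal

/-- Quantitative content of Lemma 3.10: if for every `r₀ ∈ 𝕋^k` the Diophantine
system `‖At mod ℤ^k − r₀‖∞ ≤ ε` has a solution `t ∈ ℤ^d` with `0 ≤ tᵢ ≤ Tᵢ`,
then `∏ᵢ (Tᵢ + 1) ≥ (2ε)^{-k}`. -/
theorem least_region_lower_bound
    (k d : ℕ) (hk : 0 < k) (hd : 0 < d)
    (A : Matrix (Fin k) (Fin d) ℝ)
    (ε : ℝ) (hε : 0 < ε) (hε' : ε < 1 / 2)
    (T : Fin d → ℕ)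
    (hcover : ∀ r₀ : Fin k → AddCircle (1 : ℝ),
      ∃ t : Fin d → ℤ, (∀ i, 0 ≤ t i ∧ t i ≤ (T i : ℤ)) ∧
        dist (fun i : Fin k =>
          ((A.mulVec (fun j => (t j : ℝ)) i : ℝ) : AddCircle (1 : ℝ))) r₀ ≤ ε) :
    ((2 * ε) ^ k)⁻¹ ≤ ∏ i : Fin d, ((T i : ℝ) + 1) := by
  classical
  set c : (Fin d → ℤ) → (Fin k → AddCircle (1 : ℝ)) :=
    fun t i => ((A.mulVec (fun j => (t j : ℝ)) i : ℝ) : AddCircle (1 : ℝ)) with hc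
  set S : Finset (Fin d → ℤ) := Finset.Icc 0 (fun i => (T i : ℤ)) with hS
  -- covering
  have hcov : (Set.univ : Set (Fin k → AddCircle (1 : ℝ))) ⊆
      ⋃ t ∈ S, Metric.closedBall (c t) ε := by
    intro r _
    obtain ⟨t, ht, hle⟩ := hcover r
    have hmem : t ∈ S := by
      rw [hS, Finset.mem_Icc]
      exact ⟨fun i => (ht i).1, fun i => (ht i).2⟩
    exact Set.mem_biUnion hmem (by rw [Metric.mem_closedBall, dist_comm]; exact hle)
  -- volume of univ is 1
  have huniv : volume (Set.univ : Set (Fin k → AddCircle (1 : ℝ))) = 1 := by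
    rw [← Set.pi_univ Set.univ, volume_pi_pi]
    simp [AddCircle.measure_univ]
  -- volume of each ball
  have hball : ∀ t : Fin d → ℤ,
      volume (Metric.closedBall (c t) ε) = ENNReal.ofReal (2 * ε) ^ k := by
    intro t
    rw [closedBall_pi _ hε.le, volume_pi_pi]
    have : ∀ i : Fin k, volume (Metric.closedBall (c t i) ε)
        = ENNReal.ofReal (2 * ε) := by
      intro i
      rw [AddCircle.volume_closedBall]
      congr 1
      rw [min_eq_right (by linarith)]
    simp [this]
  -- measure bound
  have hmain : (1 : ℝ≥0∞) ≤ S.card * ENNReal.ofReal (2 * ε) ^ k := by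
    calc (1 : ℝ≥0∞) = volume (Set.univ : Set (Fin k → AddCircle (1 : ℝ))) := huniv.symm
      _ ≤ volume (⋃ t ∈ S, Metric.closedBall (c t) ε) := measure_mono hcov
      _ ≤ ∑ t ∈ S, volume (Metric.closedBall (c t) ε) := measure_biUnion_finset_le S _
      _ = S.card * ENNReal.ofReal (2 * ε) ^ k := by
          simp [hball, Finset.sum_const, nsmul_eq_mul]
  -- cardinality
  have hcard : (S.card : ℝ) = ∏ i : Fin d, ((T i : ℝ) + 1) := by
    rw [hS, Pi.card_Icc]
    push_cast
    refine Finset.prod_congr rfl fun i _ => ?_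
    rw [Int.card_Icc]
    simp
  -- convert to reals
  have h2ε : (0 : ℝ) < 2 * ε := by linarith
  have hreal : (1 : ℝ) ≤ (S.card : ℝ) * (2 * ε) ^ k := by
    have := ENNReal.toReal_mono (by
      refine ENNReal.mul_ne_top (by simp) ?_
      exact ENNReal.pow_ne_top ENNReal.ofReal_ne_top) hmain
    simpa [ENNReal.toReal_mul, ENNReal.toReal_pow, ENNReal.toReal_ofReal h2ε.le, ENNReal.toReal_ofReal hε.le] using this
  rw [← hcard, inv_eq_one_div, div_le_iff₀ (pow_pos h2ε k)]
  exact hreal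
end

section
/- Let k and d be positive integers, n = d + k, and let A be any k×d real matrix. Then the set {(t, A t) mod ℤ^n : t ∈ ℝ^d} equals all of the torus 𝕋^n if and only if the set {A t mod ℤ^k : t ∈ ℤ^d} equals all of the torus 𝕋^k. -/
/-- The equivalence from the beginning of Section 3.3: the modulo image of the
slice `{(t, At) : t ∈ ℝ^d}` equals all of `𝕋^n = 𝕋^d × 𝕋^k` if and only if
`{At mod ℤ^k : t ∈ ℤ^d}` equals all of `𝕋^k`. -/
theorem slice_eq_torus_iff_integer_image_eq_torus
    (k d : ℕ) (hk : 0 < k) (hd : 0 < d)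
    (A : Matrix (Fin k) (Fin d) ℝ) :
    (Set.range (fun t : Fin d → ℝ =>
        ((fun i : Fin d => ((t i : ℝ) : AddCircle (1 : ℝ))),
         (fun i : Fin k => ((A.mulVec t i : ℝ) : AddCircle (1 : ℝ))))) = Set.univ) ↔
    (Set.range (fun t : Fin d → ℤ =>
        fun i : Fin k =>
          ((A.mulVec (fun j => (t j : ℝ)) i : ℝ) : AddCircle (1 : ℝ))) = Set.univ) := by
  have hint : ∀ m : ℤ, ((m : ℝ) : AddCircle (1 : ℝ)) = 0 := by
    intro m
    rw [AddCircle.coe_eq_zero_iff]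
    exact ⟨m, by simp⟩
  rw [Set.range_eq_univ, Set.range_eq_univ]
  constructor
  · intro h y
    obtain ⟨t, ht⟩ := h ((fun _ : Fin d => (0 : AddCircle (1 : ℝ))),
      (fun i : Fin k => ((Quotient.out (y i) : ℝ) : AddCircle (1 : ℝ))))
    have h1 : ∀ j, ((t j : ℝ) : AddCircle (1 : ℝ)) = 0 := by
      intro j
      exact congrFun (congrArg Prod.fst ht) j
    have h2 : ∀ i, ((A.mulVec t i : ℝ) : AddCircle (1 : ℝ)) = y i := by
      intro i
      have h2' : ((A.mulVec t i : ℝ) : AddCircle (1 : ℝ))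
          = ((Quotient.out (y i) : ℝ) : AddCircle (1 : ℝ)) :=
        congrFun (congrArg Prod.snd ht) i
      exact h2'.trans (QuotientAddGroup.out_eq' (y i))
    have h3 : ∀ j, ∃ m : ℤ, (m : ℝ) = t j := by
      intro j
      obtain ⟨m, hm⟩ := (AddCircle.coe_eq_zero_iff (1 : ℝ)).mp (h1 j)
      exact ⟨m, by simpa using hm⟩
    choose m hm using h3
    refine ⟨m, ?_⟩
    funext i
    show ((A.mulVec (fun j => ((m j : ℤ) : ℝ)) i : ℝ) : AddCircle (1 : ℝ)) = y i
    have hmt : (fun j => ((m j : ℤ) : ℝ)) = t := funext hm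
    rw [hmt]
    exact h2 i
  · intro h p
    obtain ⟨x, y⟩ := p
    set s : Fin d → ℝ := fun j => Quotient.out (x j) with hs
    obtain ⟨m, hm⟩ := h (fun i => y i - ((A.mulVec s i : ℝ) : AddCircle (1 : ℝ)))
    refine ⟨s + (fun j => (m j : ℝ)), ?_⟩
    have hadd : A.mulVec (s + fun j => (m j : ℝ))
        = A.mulVec s + A.mulVec (fun j => (m j : ℝ)) := Matrix.mulVec_add A s _
    ext i
    · show ((s i : ℝ) : AddCircle (1 : ℝ)) + (((m i : ℤ) : ℝ) : AddCircle (1 : ℝ)) = x i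
      rw [hint, add_zero]
      exact QuotientAddGroup.out_eq' (x i)
    · show ((A.mulVec (s + fun j => (m j : ℝ)) i : ℝ) : AddCircle (1 : ℝ)) = y i
      rw [hadd]
      have hmi : ((A.mulVec (fun j => ((m j : ℤ) : ℝ)) i : ℝ) : AddCircle (1 : ℝ))
          = y i - ((A.mulVec s i : ℝ) : AddCircle (1 : ℝ)) := congrFun hm i
      show ((A.mulVec s i : ℝ) : AddCircle (1 : ℝ))
          + ((A.mulVec (fun j => (m j : ℝ)) i : ℝ) : AddCircle (1 : ℝ)) = y i
      rw [hmi]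
      abel
end
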